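/- Under Assumptions 1 and 2, the PIAG algorithm with step size 0 < η ≤ 1/(L(K+1)) satisfies (1 + ημ/8) F_{k+1} ≤ (1 − Σ_{i=1}^{a−1} ε_i) F_k + Σ_{i=1}^{a−1} ε_i F_{k−iK} + 4KQ ε_{a−1} Σ_{j=k−aK}^{k} F_j for any integer a ≥ 2 and k ≥ aK+1, where ε_i = 2ηL(ηKL)^{i−1} and Q = L/μ. -/

import Mathlib

open RealInnerProductSpace Set

section Helpers

lemma lin_le {B C : ℝ} (h : ∀ t : ℝ, t ∈ Set.Ioo (0:ℝ) 1 → (1 - t) * B ≤ C) : B ≤ C := by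
  by_contra hc
  push_neg at hc
  set t : ℝ := min (1/2) ((B - C) / (2 * (|B| + 1))) with ht
  have hBC : 0 < B - C := by linarith
  have habs : 0 < |B| + 1 := by positivity
  have ht0 : 0 < t := by
    apply lt_min (by norm_num)
    positivity
  have ht1 : t < 1 := lt_of_le_of_lt (min_le_left _ _) (by norm_num)
  have h1 := h t ⟨ht0, ht1⟩
  have h2 : t * (|B| + 1) ≤ (B - C) / 2 := by
    have := min_le_right (1/2) ((B - C) / (2 * (|B| + 1)))
    calc t * (|B| + 1) ≤ (B - C) / (2 * (|B| + 1)) * (|B| + 1) := by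
          apply mul_le_mul_of_nonneg_right this habs.le
      _ = (B - C) / 2 := by field_simp
  have h3 : t * B ≤ t * (|B| + 1) := by
    have : B ≤ |B| + 1 := by cases abs_cases B <;> linarith
    exact mul_le_mul_of_nonneg_left this ht0.le
  nlinarith

lemma tele_sum {M : Type*} [AddCommGroup M] (f : ℕ → M) {p q : ℕ} (h : p ≤ q) :
    ∑ j ∈ Finset.Ico p q, (f (j+1) - f j) = f q - f p := by
  induction q, h using Nat.le_induction with
  | base => simp
  | succ q hq ih =>
      rw [Finset.sum_Ico_succ_top (by omega), ih]
      abel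

lemma tele_sum' (f : ℕ → ℝ) {p q : ℕ} (h : p ≤ q) :
    ∑ j ∈ Finset.Ico p q, (f j - f (j+1)) = f p - f q := by
  have := tele_sum f h
  have h2 : ∑ j ∈ Finset.Ico p q, (f j - f (j+1)) = - ∑ j ∈ Finset.Ico p q, (f (j+1) - f j) := by
    rw [← Finset.sum_neg_distrib]
    congr 1; funext j; ring
  rw [h2, this]; ring

lemma shift_sum {F : ℕ → ℝ} (hF : ∀ j, 0 ≤ F j) {p k : ℕ} (hk : 1 ≤ k) :
    ∑ l ∈ Finset.Icc p (k-1), F (l+1) ≤ ∑ j ∈ Finset.Icc p k, F j := by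
  have himg : ∑ l ∈ Finset.Icc p (k-1), F (l+1)
      = ∑ j ∈ (Finset.Icc p (k-1)).image (· + 1), F j := by
    rw [Finset.sum_image (fun a _ b _ hab => by omega)]
  rw [himg]
  apply Finset.sum_le_sum_of_subset_of_nonneg
  · intro j hj
    simp only [Finset.mem_image, Finset.mem_Icc] at hj
    obtain ⟨l, hl, rfl⟩ := hj
    rw [Finset.mem_Icc]
    omega
  · intro j _ _
    exact hF j

lemma window_bound {D : ℕ → ℝ} (hD : ∀ l, 0 ≤ D l) {K p q : ℕ} (hp : K + 1 ≤ p) :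
    ∑ j ∈ Finset.Icc p q, ∑ l ∈ Finset.Icc (j-K) (j-1), D l
      ≤ (K : ℝ) * ∑ l ∈ Finset.Icc (p-K) q, D l := by
  have step1 : ∀ j ∈ Finset.Icc p q,
      ∑ l ∈ Finset.Icc (j-K) (j-1), D l
        = ∑ l ∈ Finset.Icc (p-K) q, (if j ∈ Finset.Icc (l+1) (l+K) then D l else 0) := by
    intro j hj
    rw [Finset.mem_Icc] at hj
    rw [← Finset.sum_filter]
    apply Finset.sum_congr _ (fun _ _ => rfl)
    ext l
    simp only [Finset.mem_filter, Finset.mem_Icc]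
    omega
  rw [Finset.sum_congr rfl step1, Finset.sum_comm]
  rw [Finset.mul_sum]
  apply Finset.sum_le_sum
  intro l _
  rw [Finset.sum_ite_mem]
  rw [Finset.sum_const]
  have hcard : (Finset.Icc p q ∩ Finset.Icc (l+1) (l+K)).card ≤ K := by
    calc (Finset.Icc p q ∩ Finset.Icc (l+1) (l+K)).card
        ≤ (Finset.Icc (l+1) (l+K)).card := Finset.card_le_card Finset.inter_subset_right
      _ = K := by rw [Nat.card_Icc]; omega
  rw [nsmul_eq_mul]
  exact mul_le_mul_of_nonneg_right (by exact_mod_cast hcard) (hD l)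

variable {E : Type*} [NormedAddCommGroup E] [InnerProductSpace ℝ E] [CompleteSpace E]

omit [CompleteSpace E] in
lemma comb_identity' (u v : E) (t : ℝ) :
    ‖(1 - t)•u + t•v‖^2 = (1-t)*‖u‖^2 + t*‖v‖^2 - t*(1-t)*‖u - v‖^2 := by
  simp only [← real_inner_self_eq_norm_sq]
  simp only [inner_add_left, inner_add_right, inner_sub_left, inner_sub_right,
    real_inner_smul_left, real_inner_smul_right]
  rw [real_inner_comm v u]
  ring

omit [CompleteSpace E] in
lemma expand_sq (u v : E) :
    ‖u + v‖^2 = ‖u‖^2 + 2 * ⟪u, v⟫ + ‖v‖^2 := by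
  simp only [← real_inner_self_eq_norm_sq]
  simp only [inner_add_left, inner_add_right]
  rw [real_inner_comm v u]
  ring

lemma slope_lim' {φ : ℝ → ℝ} {c A B : ℝ} (hd : HasDerivAt φ c 0)
    (h : ∀ t ∈ Set.Ioo (0:ℝ) 1, φ t - φ 0 ≤ t * A + t^2 * B) : c ≤ A := by
  have hs := hasDerivAt_iff_tendsto_slope.mp hd
  have T1 : Filter.Tendsto (slope φ 0) (nhdsWithin 0 (Set.Ioi 0)) (nhds c) :=
    hs.mono_left (nhdsWithin_mono 0 (fun y hy => ne_of_gt hy))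
  have T2 : Filter.Tendsto (fun t : ℝ => A + t * B) (nhdsWithin 0 (Set.Ioi 0)) (nhds A) := by
    have : Filter.Tendsto (fun t : ℝ => A + t * B) (nhds 0) (nhds (A + 0 * B)) := by
      exact (continuous_const.add (continuous_id.mul continuous_const)).tendsto 0
    simpa using this.mono_left nhdsWithin_le_nhds
  refine le_of_tendsto_of_tendsto T1 T2 ?_
  refine Filter.eventually_of_mem (Ioo_mem_nhdsGT_of_mem (by norm_num : (0:ℝ) ∈ Set.Ico (0:ℝ) 1)) ?_
  intro t ht
  have ht0 : (0:ℝ) < t := ht.1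
  have := h t ht
  rw [slope_def_field]
  rw [div_le_iff₀ (by simpa using ht0)]
  calc φ t - φ 0 ≤ t * A + t^2 * B := this
    _ = (A + t * B) * (t - 0) := by ring

lemma line_deriv (fs : E → ℝ) (x v Gx : E)
    (hG : HasFDerivAt fs (InnerProductSpace.toDual ℝ E Gx) x) :
    HasDerivAt (fun t : ℝ => fs (x + t • v)) (⟪Gx, v⟫) 0 := by
  have hline : HasDerivAt (fun t : ℝ => x + t • v) v 0 := by
    simpa using ((hasDerivAt_id (0:ℝ)).smul_const v).const_add x
  have hG' : HasFDerivAt fs (InnerProductSpace.toDual ℝ E Gx) (x + (0:ℝ) • v) := by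
    simpa using hG
  have := hG'.comp_hasDerivAt (0:ℝ) hline
  exact this

lemma strong_lower {fs : E → ℝ} {μ : ℝ} (hμ : 0 ≤ μ)
    (hsc : ConvexOn ℝ Set.univ (fun z => fs z - μ/2*‖z‖^2))
    {x z Gx : E} (hG : HasFDerivAt fs (InnerProductSpace.toDual ℝ E Gx) x) :
    fs x + ⟪Gx, z - x⟫ + μ/2*‖z - x‖^2 ≤ fs z := by
  set v := z - x with hv
  have key : ∀ t ∈ Set.Ioo (0:ℝ) 1,
      fs (x + t • v) - fs x
        ≤ t * (fs z - fs x - μ/2*‖v‖^2) + t^2 * (μ/2*‖v‖^2) := by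
    intro t ht
    have hcomb := hsc.2 (Set.mem_univ x) (Set.mem_univ z)
      (by linarith [ht.2] : (0:ℝ) ≤ 1 - t) (le_of_lt ht.1) (by ring)
    simp only at hcomb
    have hpt : (1-t) • x + t • z = x + t • v := by
      rw [hv]; module
    have hid : ‖(1 - t)•x + t•z‖^2 = (1-t)*‖x‖^2 + t*‖z‖^2 - t*(1-t)*‖x - z‖^2 :=
      comb_identity' x z t
    rw [hpt] at hcomb hid
    have hnorm : ‖x - z‖ = ‖v‖ := by rw [hv, ← norm_neg]; congr 1; abel
    rw [hnorm] at hid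
    simp only [smul_eq_mul] at hcomb
    have e1 : μ/2*‖x + t • v‖^2
        = μ/2*(1-t)*‖x‖^2 + μ/2*t*‖z‖^2 - μ/2*t*(1-t)*‖v‖^2 := by rw [hid]; ring
    nlinarith [hcomb, e1]
  have hd := line_deriv fs x v Gx hG
  have := slope_lim' hd (fun t ht => by simpa using key t ht)
  have hz : x + v = z := by rw [hv]; abel
  nlinarith [this]

lemma descent_lemma {f : E → ℝ} {Gf : E → E} {Lf : ℝ}
    (hG : ∀ y, HasFDerivAt f (InnerProductSpace.toDual ℝ E (Gf y)) y)
    (hLip : ∀ u v, ‖Gf u - Gf v‖ ≤ Lf*‖u - v‖) (x u : E) :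
    f (x + u) ≤ f x + ⟪Gf x, u⟫ + Lf/2*‖u‖^2 := by
  set g : ℝ → ℝ := fun t => f (x + t • u) - t * ⟪Gf x, u⟫ - Lf/2 * t^2 * ‖u‖^2 with hg
  have hder : ∀ t : ℝ, HasDerivAt g (⟪Gf (x + t • u), u⟫ - ⟪Gf x, u⟫ - Lf * t * ‖u‖^2) t := by
    intro t
    have h1 : HasDerivAt (fun s : ℝ => f (x + s • u)) (⟪Gf (x + t • u), u⟫) t := by
      have hline : HasDerivAt (fun s : ℝ => x + s • u) u t := by
        simpa using ((hasDerivAt_id (t:ℝ)).smul_const u).const_add x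
      have := (hG (x + t • u)).comp_hasDerivAt t hline
      exact this
    have h2 : HasDerivAt (fun s : ℝ => s * ⟪Gf x, u⟫) (⟪Gf x, u⟫) t := by
      simpa using (hasDerivAt_id t).mul_const (⟪Gf x, u⟫)
    have h3 : HasDerivAt (fun s : ℝ => Lf/2 * s^2 * ‖u‖^2) (Lf * t * ‖u‖^2) t := by
      have h4 : HasDerivAt (fun s : ℝ => s^2) (2*t) t := by
        simpa using hasDerivAt_pow 2 t
      have := (h4.const_mul (Lf/2)).mul_const (‖u‖^2)
      rw [show Lf * t * ‖u‖^2 = Lf / 2 * (2 * t) * ‖u‖ ^ 2 by ring]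
      exact this
    exact (h1.sub h2).sub h3
  have hmono : AntitoneOn g (Set.Icc (0:ℝ) 1) := by
    apply antitoneOn_of_deriv_nonpos (convex_Icc 0 1)
    · exact Continuous.continuousOn
        (Differentiable.continuous (fun t => (hder t).differentiableAt))
    · intro t _
      exact (hder t).differentiableAt.differentiableWithinAt
    · intro t ht
      rw [interior_Icc] at ht
      rw [(hder t).deriv]
      have hb : ⟪Gf (x + t • u) - Gf x, u⟫ ≤ Lf * t * ‖u‖^2 := by
        calc ⟪Gf (x + t • u) - Gf x, u⟫ ≤ ‖Gf (x + t • u) - Gf x‖ * ‖u‖ :=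
              real_inner_le_norm _ _
          _ ≤ (Lf * ‖(x + t • u) - x‖) * ‖u‖ := by
              apply mul_le_mul_of_nonneg_right (hLip _ _) (norm_nonneg _)
          _ = Lf * t * ‖u‖^2 := by
              have : ‖(x + t • u) - x‖ = t * ‖u‖ := by
                simp [norm_smul, abs_of_pos ht.1]
              rw [this]; ring
      rw [inner_sub_left] at hb
      linarith
  have h01 := hmono (Set.mem_Icc.mpr (by norm_num)) (Set.mem_Icc.mpr (by norm_num))
    (by norm_num : (0:ℝ) ≤ 1)
  simp only [hg] at h01
  simp only [zero_smul, add_zero, one_smul, zero_mul, mul_zero] at h01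
  nlinarith [h01]

end Helpers

set_option maxHeartbeats 40000000

/-- Corollary 1 of the paper: for `0 < η ≤ 1/(L(K+1))`, any integer `a ≥ 2` and
`k ≥ aK + 1`, with `ε_i = 2ηL(ηKL)^{i-1}` and `Q = L/μ`,
`(1 + ημ/8) F_{k+1} ≤ (1 - ∑ ε_i) F_k + ∑ ε_i F_{k-iK}
  + 4KQ ε_{a-1} ∑_{j=k-aK}^{k} F_j`. -/
theorem stmt13
    {n m K : ℕ} (hm : 0 < m)
    (f : Fin m → EuclideanSpace ℝ (Fin n) → ℝ) (Li : Fin m → ℝ)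
    (hLi : ∀ i, 0 ≤ Li i)
    (hdiff : ∀ i, Differentiable ℝ (f i))
    (hLip : ∀ i x y, ‖gradient (f i) x - gradient (f i) y‖ ≤ Li i * ‖x - y‖)
    (fs : EuclideanSpace ℝ (Fin n) → ℝ)
    (hfs : ∀ z, fs z = (m : ℝ)⁻¹ * ∑ i, f i z)
    (L : ℝ) (hL : L = (m : ℝ)⁻¹ * ∑ i, Li i) (hLpos : 0 < L)
    (μ : ℝ) (hμ : 0 < μ)
    (hsc : ConvexOn ℝ Set.univ (fun z => fs z - μ / 2 * ‖z‖ ^ 2))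
    (r : EuclideanSpace ℝ (Fin n) → ℝ)
    (hr : ConvexOn ℝ Set.univ r) (hrlsc : LowerSemicontinuous r)
    (η : ℝ) (hη : 0 < η)
    (x : ℕ → EuclideanSpace ℝ (Fin n))
    (τ : Fin m → ℕ → ℕ) (hτ : ∀ i k, k - K ≤ τ i k ∧ τ i k ≤ k)
    (g : ℕ → EuclideanSpace ℝ (Fin n))
    (hg : ∀ k, g k = (m : ℝ)⁻¹ • ∑ i, gradient (f i) (x (τ i k)))
    (hiter : ∀ (k : ℕ) (z : EuclideanSpace ℝ (Fin n)),
      1 / 2 * ‖x (k + 1) - (x k - η • g k)‖ ^ 2 + η * r (x (k + 1))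
        ≤ 1 / 2 * ‖z - (x k - η • g k)‖ ^ 2 + η * r z)
    (d : ℕ → EuclideanSpace ℝ (Fin n)) (hd : ∀ k, d k = η⁻¹ • (x (k + 1) - x k))
    (xs : EuclideanSpace ℝ (Fin n)) (hxs : ∀ z, fs xs + r xs ≤ fs z + r z)
    (Fk : ℕ → ℝ) (hFk : ∀ k, Fk k = fs (x k) + r (x k) - (fs xs + r xs))
    (hηle : η ≤ 1 / (L * (K + 1)))
    (Q : ℝ) (hQ : Q = L / μ)
    (a : ℕ) (ha : 2 ≤ a)
    (ε : ℕ → ℝ) (hε : ∀ i, ε i = 2 * η * L * (η * K * L) ^ (i - 1))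
    (k : ℕ) (hk : a * K + 1 ≤ k) :
    (1 + η * μ / 8) * Fk (k + 1)
      ≤ (1 - ∑ i ∈ Finset.Icc 1 (a - 1), ε i) * Fk k
        + ∑ i ∈ Finset.Icc 1 (a - 1), ε i * Fk (k - i * K)
        + 4 * K * Q * ε (a - 1) * ∑ j ∈ Finset.Icc (k - a * K) k, Fk j := by
  classical
  -- trivial case `n = 0`
  rcases Nat.eq_zero_or_pos n with hn0 | hn
  · subst hn0
    have hsub : ∀ u v : EuclideanSpace ℝ (Fin 0), u = v := by
      intro u v; ext i; exact i.elim0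
    have hF0 : ∀ j, Fk j = 0 := by
      intro j; rw [hFk, hsub (x j) xs]; ring
    simp only [hF0, mul_zero, Finset.sum_const_zero, add_zero, zero_add, sub_zero, le_refl]
  -- basic facts
  have hm' : (0:ℝ) < m := by exact_mod_cast hm
  have hkey : η * L * ((K:ℝ) + 1) ≤ 1 := by
    have hpos : (0:ℝ) < L * ((K:ℝ)+1) := by positivity
    rw [le_div_iff₀ hpos] at hηle
    nlinarith [hηle]
  have hKnn : (0:ℝ) ≤ (K:ℝ) := Nat.cast_nonneg K
  have hηL1 : η * L ≤ 1 := by nlinarith [mul_nonneg (mul_nonneg hη.le hLpos.le) hKnn]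
  have hηLpos : 0 < η * L := mul_pos hη hLpos
  set G : EuclideanSpace ℝ (Fin n) → EuclideanSpace ℝ (Fin n) :=
    fun y => (m:ℝ)⁻¹ • ∑ i, gradient (f i) y with hGdef
  have hGrad : ∀ y, HasFDerivAt fs
      (InnerProductSpace.toDual ℝ (EuclideanSpace ℝ (Fin n)) (G y)) y := by
    intro y
    have hfs_eq : fs = fun z => (m:ℝ)⁻¹ * ∑ i, f i z := funext hfs
    have hsum : HasFDerivAt (fun z => ∑ i, f i z)
        (∑ i, InnerProductSpace.toDual ℝ (EuclideanSpace ℝ (Fin n)) (gradient (f i) y)) y :=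
      HasFDerivAt.fun_sum (fun i _ => ((hdiff i y).hasGradientAt.hasFDerivAt))
    have hmul := hsum.const_mul ((m:ℝ)⁻¹)
    rw [hfs_eq]
    have heq : InnerProductSpace.toDual ℝ (EuclideanSpace ℝ (Fin n)) (G y)
        = (m:ℝ)⁻¹ • ∑ i, InnerProductSpace.toDual ℝ (EuclideanSpace ℝ (Fin n))
            (gradient (f i) y) := by
      rw [hGdef]
      simp only [map_smul, map_sum]
    rw [heq]
    exact hmul
  have hGLip : ∀ u v, ‖G u - G v‖ ≤ L * ‖u - v‖ := by
    intro u v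
    have h1 : G u - G v = (m:ℝ)⁻¹ • ∑ i, (gradient (f i) u - gradient (f i) v) := by
      rw [hGdef]
      simp only [Finset.sum_sub_distrib, smul_sub]
    rw [h1, norm_smul]
    have h2 : ‖∑ i, (gradient (f i) u - gradient (f i) v)‖ ≤ ∑ i, Li i * ‖u - v‖ := by
      refine le_trans (norm_sum_le _ _) (Finset.sum_le_sum (fun i _ => hLip i u v))
    have h3 : ‖((m:ℝ)⁻¹ : ℝ)‖ = (m:ℝ)⁻¹ := by
      rw [Real.norm_eq_abs, abs_of_pos (by positivity)]
    rw [h3, hL]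
    calc (m:ℝ)⁻¹ * ‖∑ i, (gradient (f i) u - gradient (f i) v)‖
        ≤ (m:ℝ)⁻¹ * ∑ i, Li i * ‖u - v‖ := by
          apply mul_le_mul_of_nonneg_left h2 (by positivity)
      _ = (m:ℝ)⁻¹ * (∑ i, Li i) * ‖u - v‖ := by rw [← Finset.sum_mul]; ring
  have hμL : μ ≤ L := by
    set v0 : EuclideanSpace ℝ (Fin n) := EuclideanSpace.single (⟨0, hn⟩ : Fin n) (1:ℝ) with hv0
    have hnv0 : ‖v0‖ = 1 := by
      rw [hv0, EuclideanSpace.norm_single]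
      norm_num
    have s1 := strong_lower hμ.le hsc (hGrad 0) (z := v0)
    have s2 := strong_lower hμ.le hsc (hGrad v0) (z := 0)
    simp only [sub_zero, zero_sub, inner_neg_right, norm_neg] at s1 s2
    have hinner : ⟪G v0 - G 0, v0⟫ ≤ L * ‖v0‖ * ‖v0‖ := by
      calc ⟪G v0 - G 0, v0⟫ ≤ ‖G v0 - G 0‖ * ‖v0‖ := real_inner_le_norm _ _
        _ ≤ (L * ‖v0 - 0‖) * ‖v0‖ :=
            mul_le_mul_of_nonneg_right (hGLip v0 0) (norm_nonneg _)
        _ = L * ‖v0‖ * ‖v0‖ := by rw [sub_zero]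
    rw [inner_sub_left] at hinner
    rw [hnv0] at s1 s2 hinner
    nlinarith [s1, s2, hinner]
  have hx1 : ∀ j, x (j+1) = x j + η • d j := by
    intro j
    rw [hd, smul_smul, mul_inv_cancel₀ hη.ne', one_smul]
    abel
  have hFnn : ∀ j, 0 ≤ Fk j := fun j => by rw [hFk]; linarith [hxs (x j)]
  have hgap : ∀ y : EuclideanSpace ℝ (Fin n),
      ‖y - xs‖^2 ≤ 2/μ * (fs y + r y - (fs xs + r xs)) := by
    intro y
    have hmain : μ/2 * ‖y - xs‖^2 ≤ fs y + r y - (fs xs + r xs) := by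
      have hstep : ∀ t : ℝ, t ∈ Set.Ioo (0:ℝ) 1 →
          (1 - t) * (μ/2 * ‖y - xs‖^2) ≤ fs y + r y - (fs xs + r xs) := by
        intro t ht
        have hfscomb := hsc.2 (Set.mem_univ xs) (Set.mem_univ y)
          (by linarith [ht.2] : (0:ℝ) ≤ 1 - t) (le_of_lt ht.1) (by ring)
        have hrcomb := hr.2 (Set.mem_univ xs) (Set.mem_univ y)
          (by linarith [ht.2] : (0:ℝ) ≤ 1 - t) (le_of_lt ht.1) (by ring)
        simp only [smul_eq_mul] at hfscomb hrcomb
        have hid : ‖(1 - t)•xs + t•y‖^2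
            = (1-t)*‖xs‖^2 + t*‖y‖^2 - t*(1-t)*‖xs - y‖^2 := comb_identity' xs y t
        have hopt := hxs ((1 - t)•xs + t•y)
        have hnorm : ‖xs - y‖ = ‖y - xs‖ := norm_sub_rev _ _
        rw [hnorm] at hid
        have e1 : μ/2 * ‖(1 - t)•xs + t•y‖^2
            = μ/2*(1-t)*‖xs‖^2 + μ/2*t*‖y‖^2 - μ/2*t*(1-t)*‖y - xs‖^2 := by
          rw [hid]; ring
        -- combine: F(xs) ≤ F(comb) ≤ (1-t) F xs + t F y - μ/2 t(1-t)‖y-xs‖²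
        have hcomb2 : fs ((1 - t)•xs + t•y) + r ((1 - t)•xs + t•y)
            ≤ (1-t) * (fs xs + r xs) + t * (fs y + r y) - μ/2*t*(1-t)*‖y - xs‖^2 := by
          nlinarith [hfscomb, hrcomb, e1]
        have hdiv : t * ((1-t) * (μ/2 * ‖y - xs‖^2)) ≤ t * (fs y + r y - (fs xs + r xs)) := by
          nlinarith [hopt, hcomb2]
        exact le_of_mul_le_mul_left hdiv ht.1
      exact lin_le hstep
    rw [div_mul_eq_mul_div, le_div_iff₀ hμ]
    nlinarith [hmain]
  have hprox : ∀ j (z : EuclideanSpace ℝ (Fin n)),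
      r (x (j+1)) ≤ r z + ⟪z - x (j+1), d j + g j⟫ := by
    intro j z
    set w := x (j+1) with hw
    set y := x j - η • g j with hy
    have hA : ‖w - z‖^2/2 ≤ (1/2*‖z - y‖^2 + η * r z) - (1/2*‖w - y‖^2 + η * r w) := by
      have hstep : ∀ t : ℝ, t ∈ Set.Ioo (0:ℝ) 1 →
          (1 - t) * (‖w - z‖^2/2)
            ≤ (1/2*‖z - y‖^2 + η * r z) - (1/2*‖w - y‖^2 + η * r w) := by
        intro t ht
        have hit := hiter j ((1 - t) • w + t • z)
        rw [← hw, ← hy] at hit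
        have hrc := hr.2 (Set.mem_univ w) (Set.mem_univ z)
          (by linarith [ht.2] : (0:ℝ) ≤ 1 - t) (le_of_lt ht.1) (by ring)
        simp only [smul_eq_mul] at hrc
        have hzt : (1 - t) • w + t • z - y = (1 - t) • (w - y) + t • (z - y) := by
          module
        have hid : ‖(1 - t) • (w - y) + t • (z - y)‖^2
            = (1-t)*‖w - y‖^2 + t*‖z - y‖^2 - t*(1-t)*‖(w - y) - (z - y)‖^2 :=
          comb_identity' _ _ t
        have hwz : (w - y) - (z - y) = w - z := by abel
        rw [hwz] at hid
        rw [hzt] at hit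
        have hdiv : t * ((1 - t) * (‖w - z‖^2/2) + (1/2*‖w - y‖^2 + η * r w))
            ≤ t * (1/2*‖z - y‖^2 + η * r z) := by
          nlinarith [hit, hid, mul_le_mul_of_nonneg_left hrc hη.le]
        have := le_of_mul_le_mul_left hdiv ht.1
        linarith
      exact lin_le hstep
    have hexp : ‖z - y‖^2 = ‖z - w‖^2 + 2 * ⟪z - w, w - y⟫ + ‖w - y‖^2 := by
      have h1 : z - y = (z - w) + (w - y) := by abel
      rw [h1, expand_sq]
    have hwy : w - y = η • (d j + g j) := by
      rw [hw, hy, hx1 j, smul_add]; abel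
    have hinner : ⟪z - w, w - y⟫ = η * ⟪z - w, d j + g j⟫ := by
      rw [hwy, real_inner_smul_right]
    have hnwz : ‖w - z‖^2 = ‖z - w‖^2 := by rw [norm_sub_rev]
    have hfin : η * r w ≤ η * (r z + ⟪z - w, d j + g j⟫) := by
      nlinarith [hA, hexp, hinner, hnwz]
    exact le_of_mul_le_mul_left (by linarith [hfin]) hη
  have hB : ∀ j (z : EuclideanSpace ℝ (Fin n)), fs (x (j+1)) + r (x (j+1))
      ≤ fs z + r z + ⟪z - x (j+1), d j + (g j - G (x j))⟫ + L*η^2/2 * ‖d j‖^2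
        - μ/2 * ‖z - x j‖^2 := by
    intro j z
    have hdes := descent_lemma hGrad hGLip (x j) (η • d j)
    rw [← hx1 j] at hdes
    have hnsm : ‖η • d j‖^2 = η^2 * ‖d j‖^2 := by
      rw [norm_smul, Real.norm_eq_abs, abs_of_pos hη, mul_pow]
    rw [hnsm] at hdes
    have hsl := strong_lower hμ.le hsc (hGrad (x j)) (z := z)
    have hpr := hprox j z
    have e1 : ⟪z - x (j+1), d j + (g j - G (x j))⟫
        = ⟪z - x (j+1), d j + g j⟫ - ⟪z - x (j+1), G (x j)⟫ := by
      simp only [inner_add_right, inner_sub_right]; ring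
    have h5 : η • d j - (z - x j) = -(z - x (j+1)) := by rw [hx1 j]; abel
    have e2 : ⟪G (x j), η • d j⟫ - ⟪G (x j), z - x j⟫ = - ⟪z - x (j+1), G (x j)⟫ := by
      calc ⟪G (x j), η • d j⟫ - ⟪G (x j), z - x j⟫
          = ⟪G (x j), η • d j - (z - x j)⟫ := (inner_sub_right _ _ _).symm
        _ = ⟪G (x j), -(z - x (j+1))⟫ := by rw [h5]
        _ = - ⟪G (x j), z - x (j+1)⟫ := by rw [inner_neg_right]
        _ = - ⟪z - x (j+1), G (x j)⟫ := by rw [real_inner_comm]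
    linarith [hdes, hsl, hpr, e1, e2]
  have hC : ∀ j, Fk (j+1) ≤ Fk j - η/2*(1-η*L)*‖d j‖^2 + η/2*‖g j - G (x j)‖^2 := by
    intro j
    have hBj := hB j (x j)
    have hz5 : x j - x (j+1) = -(η • d j) := by rw [hx1 j]; abel
    have e1 : ⟪x j - x (j+1), d j + (g j - G (x j))⟫
        = -η * ‖d j‖^2 - η * ⟪d j, g j - G (x j)⟫ := by
      rw [hz5]
      simp only [inner_neg_left, real_inner_smul_left, inner_add_right,
        real_inner_self_eq_norm_sq]
      ring
    have e2 : - ⟪d j, g j - G (x j)⟫ ≤ (‖d j‖^2 + ‖g j - G (x j)‖^2)/2 := by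
      have h6 := abs_real_inner_le_norm (d j) (g j - G (x j))
      nlinarith [sq_nonneg (‖d j‖ - ‖g j - G (x j)‖), abs_le.mp h6]
    have hself2 : μ/2 * ‖x j - x j‖^2 = 0 := by
      rw [sub_self, norm_zero]; ring
    rw [hFk (j+1), hFk j]
    have e3 := mul_le_mul_of_nonneg_left e2 hη.le
    linarith [hBj, e1, hself2, e3]
  rcases Nat.eq_zero_or_pos K with hK0 | hKpos
  · -- the case `K = 0` : no delays
    subst hK0
    have hτk : ∀ i : Fin m, τ i k = k := fun i => by have := hτ i k; omega
    have hgk : g k = G (x k) := by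
      rw [hg, hGdef]
      congr 1
      exact Finset.sum_congr rfl (fun i _ => by rw [hτk i])
    have he0 : g k - G (x k) = (0 : EuclideanSpace ℝ (Fin n)) := by rw [hgk, sub_self]
    have hDnn : 0 ≤ ‖d k‖^2 := sq_nonneg _
    have hself2 : μ/2 * ‖x k - x k‖^2 = 0 := by rw [sub_self, norm_zero]; ring
    have hxk1 : x k - x (k+1) = -(η • d k) := by rw [hx1 k]; abel
    have hC0 : Fk (k+1) ≤ Fk k - η*(1 - η*L/2)*‖d k‖^2 := by
      have hBk2 := hB k (x k)
      rw [he0] at hBk2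
      have e1 : ⟪x k - x (k+1), d k + (0 : EuclideanSpace ℝ (Fin n))⟫ = -η * ‖d k‖^2 := by
        rw [add_zero, hxk1, inner_neg_left, real_inner_smul_left,
          real_inner_self_eq_norm_sq]
        ring
      rw [hFk (k+1), hFk k]
      linarith [hBk2, e1, hself2]
    have hO0 : Fk (k+1) ≤ 1/(2*μ) * ‖d k‖^2 := by
      have hBk := hB k xs
      rw [he0] at hBk
      have e1 : ⟪xs - x (k+1), d k + (0 : EuclideanSpace ℝ (Fin n))⟫
          = ⟪xs - x k, d k⟫ - η * ‖d k‖^2 := by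
        have h7 : xs - x (k+1) = (xs - x k) - η • d k := by rw [hx1 k]; abel
        rw [add_zero, h7, inner_sub_left, real_inner_smul_left,
          real_inner_self_eq_norm_sq]
      have e2 : ⟪xs - x k, d k⟫ ≤ μ/2 * ‖xs - x k‖^2 + 1/(2*μ) * ‖d k‖^2 := by
        have h6 := real_inner_le_norm (xs - x k) (d k)
        have key : μ/2 * ‖xs - x k‖^2 + 1/(2*μ) * ‖d k‖^2 - ‖xs - x k‖*‖d k‖
            = (μ*‖xs - x k‖ - ‖d k‖)^2 / (2*μ) := by
          field_simp
          ring
        have hq := div_nonneg (sq_nonneg (μ*‖xs - x k‖ - ‖d k‖))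
          (by positivity : (0:ℝ) ≤ 2*μ)
        linarith [h6, key, hq]
      have e4 : L*η^2/2*‖d k‖^2 ≤ η/2*‖d k‖^2 := by
        nlinarith [mul_le_mul_of_nonneg_right hηL1 (mul_nonneg hη.le hDnn)]
      rw [hFk (k+1)]
      linarith [hBk, e1, e2, e4, mul_nonneg hη.le hDnn]
    have hcomb : (1 + η*μ/8) * Fk (k+1) ≤ Fk k := by
      have h7 := mul_le_mul_of_nonneg_left hO0 (by positivity : (0:ℝ) ≤ η*μ/8)
      have h8 : η*μ/8 * (1/(2*μ) * ‖d k‖^2) = η/16 * ‖d k‖^2 := by field_simp; ring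
      have e5 : η/16*‖d k‖^2 - η*(1 - η*L/2)*‖d k‖^2 ≤ 0 := by
        nlinarith [mul_nonneg hη.le hDnn,
          mul_le_mul_of_nonneg_right hηL1 (mul_nonneg hη.le hDnn)]
      nlinarith [hC0, h7, h8, e5]
    have hR1 : ∑ i ∈ Finset.Icc 1 (a-1), ε i * Fk (k - i * 0)
        = (∑ i ∈ Finset.Icc 1 (a-1), ε i) * Fk k := by
      rw [Finset.sum_mul]
      exact Finset.sum_congr rfl (fun i _ => by rw [Nat.mul_zero, Nat.sub_zero])
    have hlast : 4 * ((0:ℕ):ℝ) * Q * ε (a-1) * ∑ j ∈ Finset.Icc (k - a*0) k, Fk j = 0 := by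
      norm_num
    rw [hR1, hlast]
    nlinarith [hcomb]
  · -- the main case `K ≥ 1`
    have hK1 : (1:ℝ) ≤ (K:ℝ) := by exact_mod_cast hKpos
    have hηL2 : η * L ≤ 1/2 := by nlinarith [hkey, hηLpos]
    have hηLK : η * L * (K:ℝ) ≤ 1 - η * L := by nlinarith [hkey]
    have hKk : K ≤ a * K := Nat.le_mul_of_pos_left K (by omega)
    -- bound on the gradient error in terms of past steps
    have hE : ∀ j, K ≤ j → 1 ≤ j → ‖g j - G (x j)‖^2
        ≤ η^2*L^2*(K:ℝ) * ∑ l ∈ Finset.Icc (j-K) (j-1), ‖d l‖^2 := by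
      intro j hKj h1j
      have hT : ∀ i : Fin m, ‖x (τ i j) - x j‖
          ≤ η * ∑ l ∈ Finset.Icc (j-K) (j-1), ‖d l‖ := by
        intro i
        have hτj := hτ i j
        have htel : x j - x (τ i j) = ∑ l ∈ Finset.Ico (τ i j) j, (x (l+1) - x l) :=
          (tele_sum x hτj.2).symm
        rw [norm_sub_rev]
        calc ‖x j - x (τ i j)‖ = ‖∑ l ∈ Finset.Ico (τ i j) j, η • d l‖ := by
              rw [htel]
              exact congrArg _ (Finset.sum_congr rfl (fun l _ => by rw [hx1 l]; abel))
          _ ≤ ∑ l ∈ Finset.Ico (τ i j) j, ‖η • d l‖ := norm_sum_le _ _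
          _ = ∑ l ∈ Finset.Ico (τ i j) j, η * ‖d l‖ := by
              refine Finset.sum_congr rfl (fun l _ => ?_)
              rw [norm_smul, Real.norm_eq_abs, abs_of_pos hη]
          _ ≤ ∑ l ∈ Finset.Icc (j-K) (j-1), η * ‖d l‖ := by
              apply Finset.sum_le_sum_of_subset_of_nonneg
              · intro l hl
                rw [Finset.mem_Ico] at hl
                rw [Finset.mem_Icc]
                have := hτj.1
                omega
              · intro l _ _
                positivity
          _ = η * ∑ l ∈ Finset.Icc (j-K) (j-1), ‖d l‖ := by rw [Finset.mul_sum]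
      have he : g j - G (x j)
          = (m:ℝ)⁻¹ • ∑ i, (gradient (f i) (x (τ i j)) - gradient (f i) (x j)) := by
        rw [hg, hGdef]
        rw [Finset.sum_sub_distrib, smul_sub]
      have hTnn : 0 ≤ ∑ l ∈ Finset.Icc (j-K) (j-1), ‖d l‖ :=
        Finset.sum_nonneg (fun l _ => norm_nonneg _)
      have hne : ‖g j - G (x j)‖ ≤ η * L * ∑ l ∈ Finset.Icc (j-K) (j-1), ‖d l‖ := by
        rw [he, norm_smul]
        have h3 : ‖((m:ℝ)⁻¹ : ℝ)‖ = (m:ℝ)⁻¹ := by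
          rw [Real.norm_eq_abs, abs_of_pos (by positivity)]
        rw [h3]
        calc (m:ℝ)⁻¹ * ‖∑ i, (gradient (f i) (x (τ i j)) - gradient (f i) (x j))‖
            ≤ (m:ℝ)⁻¹ * ∑ i, (Li i * (η * ∑ l ∈ Finset.Icc (j-K) (j-1), ‖d l‖)) := by
              apply mul_le_mul_of_nonneg_left _ (by positivity)
              refine le_trans (norm_sum_le _ _) (Finset.sum_le_sum (fun i _ => ?_))
              calc ‖gradient (f i) (x (τ i j)) - gradient (f i) (x j)‖
                  ≤ Li i * ‖x (τ i j) - x j‖ := hLip i _ _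
                _ ≤ Li i * (η * ∑ l ∈ Finset.Icc (j-K) (j-1), ‖d l‖) :=
                    mul_le_mul_of_nonneg_left (hT i) (hLi i)
          _ = η * L * ∑ l ∈ Finset.Icc (j-K) (j-1), ‖d l‖ := by
              rw [hL, ← Finset.sum_mul]
              ring
      have h4 : ‖g j - G (x j)‖^2 ≤ (η * L * ∑ l ∈ Finset.Icc (j-K) (j-1), ‖d l‖)^2 :=
        pow_le_pow_left₀ (norm_nonneg _) hne 2
      have hCS : (∑ l ∈ Finset.Icc (j-K) (j-1), ‖d l‖)^2
          ≤ (K:ℝ) * ∑ l ∈ Finset.Icc (j-K) (j-1), ‖d l‖^2 := by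
        have hcs := Finset.sum_mul_sq_le_sq_mul_sq (Finset.Icc (j-K) (j-1))
          (fun _ => (1:ℝ)) (fun l => ‖d l‖)
        simp only [one_mul, one_pow] at hcs
        have hcard : ∑ _l ∈ Finset.Icc (j-K) (j-1), (1:ℝ) = ((K:ℝ)) := by
          rw [Finset.sum_const, Nat.card_Icc]
          have h9 : (j-1+1) - (j-K) = K := by omega
          rw [h9]
          simp
        rw [hcard] at hcs
        exact hcs
      calc ‖g j - G (x j)‖^2 ≤ (η * L * ∑ l ∈ Finset.Icc (j-K) (j-1), ‖d l‖)^2 := h4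
        _ = η^2*L^2 * (∑ l ∈ Finset.Icc (j-K) (j-1), ‖d l‖)^2 := by ring
        _ ≤ η^2*L^2 * ((K:ℝ) * ∑ l ∈ Finset.Icc (j-K) (j-1), ‖d l‖^2) :=
            mul_le_mul_of_nonneg_left hCS (by positivity)
        _ = η^2*L^2*(K:ℝ) * ∑ l ∈ Finset.Icc (j-K) (j-1), ‖d l‖^2 := by ring
    -- one step inequality with optimality point
    have hO : Fk (k+1) ≤ 1/μ*(‖d k‖^2 + ‖g k - G (x k)‖^2) + η/2*‖g k - G (x k)‖^2 := by
      have hBk := hB k xs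
      have h7 : xs - x (k+1) = (xs - x k) - η • d k := by rw [hx1 k]; abel
      have e1 : ⟪xs - x (k+1), d k + (g k - G (x k))⟫
          = ⟪xs - x k, d k + (g k - G (x k))⟫ - η*‖d k‖^2 - η*⟪d k, g k - G (x k)⟫ := by
        rw [h7]
        simp only [inner_sub_left, inner_add_right, real_inner_smul_left,
          real_inner_self_eq_norm_sq]
        ring
      have e2 : ⟪xs - x k, d k + (g k - G (x k))⟫
          ≤ μ/2*‖xs - x k‖^2 + 1/(2*μ)*‖d k + (g k - G (x k))‖^2 := by
        have h6 := real_inner_le_norm (xs - x k) (d k + (g k - G (x k)))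
        have key : μ/2*‖xs - x k‖^2 + 1/(2*μ)*‖d k + (g k - G (x k))‖^2
            - ‖xs - x k‖*‖d k + (g k - G (x k))‖
            = (μ*‖xs - x k‖ - ‖d k + (g k - G (x k))‖)^2/(2*μ) := by
          field_simp
          ring
        have hq := div_nonneg
          (sq_nonneg (μ*‖xs - x k‖ - ‖d k + (g k - G (x k))‖))
          (by positivity : (0:ℝ) ≤ 2*μ)
        linarith [h6, key, hq]
      have e3 : ‖d k + (g k - G (x k))‖^2 ≤ 2*‖d k‖^2 + 2*‖g k - G (x k)‖^2 := by
        have h8 := norm_add_le (d k) (g k - G (x k))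
        have h9 : ‖d k + (g k - G (x k))‖^2 ≤ (‖d k‖ + ‖g k - G (x k)‖)^2 :=
          pow_le_pow_left₀ (norm_nonneg _) h8 2
        nlinarith [h9, sq_nonneg (‖d k‖ - ‖g k - G (x k)‖)]
      have e4 : - ⟪d k, g k - G (x k)⟫ ≤ (‖d k‖^2 + ‖g k - G (x k)‖^2)/2 := by
        have h6 := abs_real_inner_le_norm (d k) (g k - G (x k))
        nlinarith [sq_nonneg (‖d k‖ - ‖g k - G (x k)‖), abs_le.mp h6]
      have e5 := mul_le_mul_of_nonneg_left e3 (by positivity : (0:ℝ) ≤ 1/(2*μ))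
      have e6 : 1/(2*μ)*(2*‖d k‖^2 + 2*‖g k - G (x k)‖^2)
          = 1/μ*(‖d k‖^2 + ‖g k - G (x k)‖^2) := by
        field_simp
      have e7 := mul_le_mul_of_nonneg_left e4 hη.le
      have e8 : L*η^2/2*‖d k‖^2 ≤ η/2*‖d k‖^2 := by
        nlinarith [mul_le_mul_of_nonneg_right hηL1 (mul_nonneg hη.le (sq_nonneg ‖d k‖))]
      rw [hFk (k+1)]
      linarith [hBk, e1, e2, e5, e6, e7, e8, mul_nonneg hη.le (sq_nonneg ‖d k‖)]
    -- the recursion (M)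
    have hMk : (1 + η*μ/8) * Fk (k+1) ≤ Fk k + η * ‖g k - G (x k)‖^2 := by
      have hCk := hC k
      have h7 := mul_le_mul_of_nonneg_left hO (by positivity : (0:ℝ) ≤ η*μ/8)
      have e9 : η*μ/8 * (1/μ*(‖d k‖^2 + ‖g k - G (x k)‖^2) + η/2*‖g k - G (x k)‖^2)
          = η/8*‖d k‖^2 + η/8*‖g k - G (x k)‖^2 + η^2*μ/16*‖g k - G (x k)‖^2 := by
        field_simp
        ring
      have e10 : η/8*‖d k‖^2 ≤ η/2*(1 - η*L)*‖d k‖^2 := by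
        nlinarith [mul_nonneg hη.le (sq_nonneg ‖d k‖),
          mul_le_mul_of_nonneg_right hηL2 (mul_nonneg hη.le (sq_nonneg ‖d k‖))]
      have e11 : η^2*μ/16*‖g k - G (x k)‖^2 ≤ η/32*‖g k - G (x k)‖^2 := by
        have hημ : η*μ ≤ 1/2 := by nlinarith [mul_le_mul_of_nonneg_left hμL hη.le]
        nlinarith [mul_nonneg hη.le (sq_nonneg ‖g k - G (x k)‖),
          mul_le_mul_of_nonneg_right hημ (mul_nonneg hη.le (sq_nonneg ‖g k - G (x k)‖))]
      linarith [hCk, h7, e9, e10, e11, mul_nonneg hη.le (sq_nonneg ‖g k - G (x k)‖)]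
    -- facts about ε
    have hεnn : ∀ i, 0 ≤ ε i := fun i => by rw [hε]; positivity
    have hε1 : ε 1 = 2 * η * L := by rw [hε]; norm_num
    have hεsucc : ∀ i, 1 ≤ i → ε (i+1) = ε i * (η * K * L) := by
      intro i hi
      rw [hε, hε]
      have h9 : i + 1 - 1 = (i - 1) + 1 := by omega
      rw [h9, pow_succ]
      ring
    have hWnn : ∀ p, (0:ℝ) ≤ ∑ l ∈ Finset.Icc p (k-1), ‖d l‖^2 :=
      fun p => Finset.sum_nonneg (fun l _ => sq_nonneg _)
    -- the one-level unrolling step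
    have hstep : ∀ i, 1 ≤ i → i ≤ a - 1 →
        ε i * (η/2*(1 - η*L)) * (∑ l ∈ Finset.Icc (k - i*K) (k-1), ‖d l‖^2)
          ≤ ε i * (Fk (k - i*K) - Fk k)
            + ε (i+1) * (η/2*(1 - η*L)) * (∑ l ∈ Finset.Icc (k - (i+1)*K) (k-1), ‖d l‖^2) := by
      intro i hi hia
      have hik : i*K ≤ (a-1)*K := Nat.mul_le_mul hia (le_refl K)
      have haK : (a-1)*K = a*K - 1*K := Nat.sub_mul a 1 K
      have hp1 : K + 1 ≤ k - i*K := by omega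
      have hsum : (η/2*(1 - η*L)) * (∑ l ∈ Finset.Icc (k - i*K) (k-1), ‖d l‖^2)
          ≤ (Fk (k - i*K) - Fk k)
            + η/2 * ∑ j ∈ Finset.Icc (k - i*K) (k-1), ‖g j - G (x j)‖^2 := by
        have hico : Finset.Icc (k - i*K) (k-1) = Finset.Ico (k - i*K) k := by
          rw [← Finset.Ico_add_one_right_eq_Icc]
          congr 1
          omega
        have htel : ∑ j ∈ Finset.Ico (k - i*K) k, (Fk j - Fk (j+1)) = Fk (k - i*K) - Fk k :=
          tele_sum' Fk (by omega)
        calc (η/2*(1 - η*L)) * (∑ l ∈ Finset.Icc (k - i*K) (k-1), ‖d l‖^2)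
            = ∑ j ∈ Finset.Icc (k - i*K) (k-1), η/2*(1 - η*L) * ‖d j‖^2 := by
              rw [Finset.mul_sum]
          _ ≤ ∑ j ∈ Finset.Icc (k - i*K) (k-1),
                ((Fk j - Fk (j+1)) + η/2 * ‖g j - G (x j)‖^2) :=
              Finset.sum_le_sum (fun j _ => by linarith [hC j])
          _ = (∑ j ∈ Finset.Icc (k - i*K) (k-1), (Fk j - Fk (j+1)))
              + η/2 * ∑ j ∈ Finset.Icc (k - i*K) (k-1), ‖g j - G (x j)‖^2 := by
              rw [Finset.sum_add_distrib, Finset.mul_sum]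
          _ = (Fk (k - i*K) - Fk k)
              + η/2 * ∑ j ∈ Finset.Icc (k - i*K) (k-1), ‖g j - G (x j)‖^2 := by
              rw [hico, htel]
      have hEsum : ∑ j ∈ Finset.Icc (k - i*K) (k-1), ‖g j - G (x j)‖^2
          ≤ η^2*L^2*(K:ℝ)
            * ((K:ℝ) * ∑ l ∈ Finset.Icc (k - (i+1)*K) (k-1), ‖d l‖^2) := by
        have hwb := window_bound (fun l => sq_nonneg ‖d l‖) (q := k-1) hp1
        have hidx : k - i*K - K = k - (i+1)*K := by
          rw [Nat.sub_sub, ← Nat.succ_mul]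
        rw [hidx] at hwb
        calc ∑ j ∈ Finset.Icc (k - i*K) (k-1), ‖g j - G (x j)‖^2
            ≤ ∑ j ∈ Finset.Icc (k - i*K) (k-1),
                (η^2*L^2*(K:ℝ) * ∑ l ∈ Finset.Icc (j-K) (j-1), ‖d l‖^2) := by
              refine Finset.sum_le_sum (fun j hj => ?_)
              rw [Finset.mem_Icc] at hj
              exact hE j (by omega) (by omega)
          _ = η^2*L^2*(K:ℝ) * ∑ j ∈ Finset.Icc (k - i*K) (k-1),
                ∑ l ∈ Finset.Icc (j-K) (j-1), ‖d l‖^2 := by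
              rw [Finset.mul_sum]
          _ ≤ η^2*L^2*(K:ℝ)
              * ((K:ℝ) * ∑ l ∈ Finset.Icc (k - (i+1)*K) (k-1), ‖d l‖^2) :=
              mul_le_mul_of_nonneg_left hwb (by positivity)
      have hcoef : ε i * (η/2) * (η^2*L^2*(K:ℝ)*(K:ℝ))
          ≤ ε (i+1) * (η/2*(1 - η*L)) := by
        rw [hεsucc i hi]
        have hprod : 0 ≤ ε i * (η/2*(η*(K:ℝ)*L)) * (1 - η*L - η*L*(K:ℝ)) := by
          apply mul_nonneg (mul_nonneg (hεnn i) (by positivity))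
          linarith [hηLK]
        nlinarith [hprod]
      have t1 := mul_le_mul_of_nonneg_left hsum (hεnn i)
      have t2 := mul_le_mul_of_nonneg_left hEsum
        (mul_nonneg (hεnn i) (by positivity : (0:ℝ) ≤ η/2))
      have t3 := mul_le_mul_of_nonneg_right hcoef (hWnn (k - (i+1)*K))
      linarith [t1, t2, t3]
    -- the chain of unrollings
    have chain : ∀ t, t ≤ a - 1 →
        η * ‖g k - G (x k)‖^2
          ≤ (∑ i ∈ Finset.Icc 1 t, ε i * (Fk (k - i*K) - Fk k))
            + ε (t+1) * (η/2*(1 - η*L))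
              * (∑ l ∈ Finset.Icc (k - (t+1)*K) (k-1), ‖d l‖^2) := by
      intro t
      induction t with
      | zero =>
          intro _
          rw [Finset.Icc_eq_empty (by omega), Finset.sum_empty, zero_add]
          simp only [zero_add, one_mul, hε1]
          have hEk := hE k (by omega) (by omega)
          have t1 := mul_le_mul_of_nonneg_left hEk hη.le
          have hS := hWnn (k - K)
          have t2 : η * (η^2*L^2*(K:ℝ) * (∑ l ∈ Finset.Icc (k - K) (k-1), ‖d l‖^2))
              ≤ 2*η*L * (η/2*(1 - η*L)) * (∑ l ∈ Finset.Icc (k - K) (k-1), ‖d l‖^2) := by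
            nlinarith [mul_le_mul_of_nonneg_right hηLK
              (mul_nonneg (by positivity : (0:ℝ) ≤ η^2*L) hS)]
          linarith [t1, t2]
      | succ t ih =>
          intro hta
          have hih := ih (by omega)
          have hst := hstep (t+1) (by omega) hta
          rw [Finset.sum_Icc_succ_top (by omega : 1 ≤ t+1)]
          linarith [hih, hst]
    -- the tail bound
    have hSFnn : (0:ℝ) ≤ ∑ j ∈ Finset.Icc (k - a*K) k, Fk j :=
      Finset.sum_nonneg (fun j _ => hFnn j)
    have htail : ε a * (η/2*(1 - η*L)) * (∑ l ∈ Finset.Icc (k - a*K) (k-1), ‖d l‖^2)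
        ≤ 4*(K:ℝ)*Q*ε (a-1) * ∑ j ∈ Finset.Icc (k - a*K) k, Fk j := by
      have hDle : ∀ l, μ*η^2*‖d l‖^2 ≤ 4*(Fk l + Fk (l+1)) := by
        intro l
        have h1 : η * ‖d l‖ = ‖x (l+1) - x l‖ := by
          rw [hx1 l]
          have h2 : x l + η • d l - x l = η • d l := by abel
          rw [h2, norm_smul, Real.norm_eq_abs, abs_of_pos hη]
        have h2 : ‖x (l+1) - x l‖ ≤ ‖x (l+1) - xs‖ + ‖x l - xs‖ := by
          have h3 : x (l+1) - x l = (x (l+1) - xs) - (x l - xs) := by abel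
          rw [h3]
          exact norm_sub_le _ _
        have h3 := hgap (x (l+1))
        have h4 := hgap (x l)
        rw [← hFk (l+1)] at h3
        rw [← hFk l] at h4
        have h5 : (η*‖d l‖)^2 ≤ (‖x (l+1) - xs‖ + ‖x l - xs‖)^2 := by
          rw [h1]
          exact pow_le_pow_left₀ (norm_nonneg _) h2 2
        have h6 : μ * (2/μ * Fk (l+1)) = 2 * Fk (l+1) := by field_simp
        have h7 : μ * (2/μ * Fk l) = 2 * Fk l := by field_simp
        nlinarith [h5, mul_le_mul_of_nonneg_left h3 hμ.le,
          mul_le_mul_of_nonneg_left h4 hμ.le,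
          mul_nonneg hμ.le (sq_nonneg (‖x (l+1) - xs‖ - ‖x l - xs‖)), h6, h7]
      have hWa : μ*η^2 * (∑ l ∈ Finset.Icc (k - a*K) (k-1), ‖d l‖^2)
          ≤ 8 * ∑ j ∈ Finset.Icc (k - a*K) k, Fk j := by
        calc μ*η^2 * (∑ l ∈ Finset.Icc (k - a*K) (k-1), ‖d l‖^2)
            = ∑ l ∈ Finset.Icc (k - a*K) (k-1), μ*η^2*‖d l‖^2 := by rw [Finset.mul_sum]
          _ ≤ ∑ l ∈ Finset.Icc (k - a*K) (k-1), (4*Fk l + 4*Fk (l+1)) :=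
              Finset.sum_le_sum (fun l _ => by linarith [hDle l])
          _ = 4 * (∑ l ∈ Finset.Icc (k - a*K) (k-1), Fk l)
              + 4 * (∑ l ∈ Finset.Icc (k - a*K) (k-1), Fk (l+1)) := by
              rw [Finset.sum_add_distrib, Finset.mul_sum, Finset.mul_sum]
          _ ≤ 4 * (∑ j ∈ Finset.Icc (k - a*K) k, Fk j)
              + 4 * (∑ j ∈ Finset.Icc (k - a*K) k, Fk j) := by
              have hs1 : ∑ l ∈ Finset.Icc (k - a*K) (k-1), Fk l
                  ≤ ∑ j ∈ Finset.Icc (k - a*K) k, Fk j := by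
                apply Finset.sum_le_sum_of_subset_of_nonneg
                · intro l hl
                  rw [Finset.mem_Icc] at hl ⊢
                  omega
                · intro j _ _
                  exact hFnn j
              have hs2 : ∑ l ∈ Finset.Icc (k - a*K) (k-1), Fk (l+1)
                  ≤ ∑ j ∈ Finset.Icc (k - a*K) k, Fk j := shift_sum hFnn (by omega)
              linarith [hs1, hs2]
          _ = 8 * ∑ j ∈ Finset.Icc (k - a*K) k, Fk j := by ring
      have hεa : ε a = ε (a-1) * (η*(K:ℝ)*L) := by
        rw [hε, hε]
        have h9 : (η*(K:ℝ)*L)^(a-1) = (η*(K:ℝ)*L)^(a-1-1) * (η*(K:ℝ)*L) := by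
          rw [← pow_succ]
          congr 1
          omega
        rw [h9]
        ring
      have hc : (0:ℝ) ≤ ε (a-1)*(K:ℝ)*L/(2*μ) :=
        div_nonneg (mul_nonneg (mul_nonneg (hεnn _) hKnn) hLpos.le) (by positivity)
      have h10 := mul_le_mul_of_nonneg_left hWa hc
      have e1 : ε (a-1)*(K:ℝ)*L/(2*μ)
            * (μ*η^2 * (∑ l ∈ Finset.Icc (k - a*K) (k-1), ‖d l‖^2))
          = ε (a-1)*(η*(K:ℝ)*L)*(η/2) * (∑ l ∈ Finset.Icc (k - a*K) (k-1), ‖d l‖^2) := by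
        field_simp
      have e2 : ε (a-1)*(K:ℝ)*L/(2*μ) * (8 * ∑ j ∈ Finset.Icc (k - a*K) k, Fk j)
          = 4*(K:ℝ)*Q*ε (a-1) * ∑ j ∈ Finset.Icc (k - a*K) k, Fk j := by
        rw [hQ]
        field_simp
        ring
      have e3 : ε a * (η/2*(1 - η*L)) * (∑ l ∈ Finset.Icc (k - a*K) (k-1), ‖d l‖^2)
          ≤ ε (a-1)*(η*(K:ℝ)*L)*(η/2) * (∑ l ∈ Finset.Icc (k - a*K) (k-1), ‖d l‖^2) := by
        rw [hεa]
        have hprod : 0 ≤ ε (a-1)*(η*(K:ℝ)*L)*(η/2*(η*L))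
            * (∑ l ∈ Finset.Icc (k - a*K) (k-1), ‖d l‖^2) := by
          apply mul_nonneg _ (hWnn (k - a*K))
          apply mul_nonneg (mul_nonneg (hεnn (a-1)) (by positivity)) (by positivity)
        nlinarith [hprod]
      linarith [h10, e1, e2, e3]
    -- put everything together
    have hfin := chain (a-1) (le_refl _)
    have ha1 : a - 1 + 1 = a := by omega
    rw [ha1] at hfin
    have hSsplit : ∑ i ∈ Finset.Icc 1 (a-1), ε i * (Fk (k - i*K) - Fk k)
        = (∑ i ∈ Finset.Icc 1 (a-1), ε i * Fk (k - i*K))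
          - (∑ i ∈ Finset.Icc 1 (a-1), ε i) * Fk k := by
      rw [Finset.sum_mul, ← Finset.sum_sub_distrib]
      exact Finset.sum_congr rfl (fun i _ => by ring)
    linarith [hMk, hfin, htail, hSsplit]
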